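/- Fix r, s > 0, 𝔷 = 𝔞+i𝔟 with 𝔟 > 0, and ξ ∈ ℝ². Then Σ_{x,y∈ℤ} Ψ_{𝔷,ξ}(rx, sy) = (1/(r√(2𝔟))) Σ_{x,y∈ℤ} exp(−2πs²𝔟y² − (π/(2r²𝔟))(x + 2rs𝔞y + r⟨ξ,(1,1)⟩)² + 2πiy·s⟨ξ,(1,−1)⟩), where Ψ_{𝔷,ξ}(x,y) = exp(πi(4𝔞xy + 2i𝔟(x²+y²)) + 2πix⟨ξ,(1,1)⟩ + 2πiy⟨ξ,(1,−1)⟩). -/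

import Mathlib

open Complex

lemma gaussZ {γ : ℝ} (hγ : 0 < γ) : Summable fun n : ℤ => Real.exp (-γ * (n : ℝ) ^ 2) := by
  apply Summable.of_nat_of_neg <;>
  · refine Summable.of_nonneg_of_le (fun n => (Real.exp_pos _).le)
      (f := fun n : ℕ => Real.exp (-γ) ^ n) ?_ ?_
    · intro n
      rw [← Real.exp_nat_mul]
      apply Real.exp_le_exp.2
      push_cast
      have hn : (n:ℝ) ≤ (n:ℝ)^2 := by exact_mod_cast Nat.le_self_pow two_ne_zero n
      nlinarith [mul_le_mul_of_nonneg_left hn hγ.le]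
    · exact summable_geometric_of_lt_one (Real.exp_pos _).le
        (Real.exp_lt_one_iff.2 (by linarith))

lemma gaussShift {γ : ℝ} (hγ : 0 < γ) (c : ℝ) :
    Summable fun n : ℤ => Real.exp (-γ * ((n : ℝ) + c) ^ 2) := by
  refine Summable.of_nonneg_of_le (fun n => (Real.exp_pos _).le)
    (f := fun n : ℤ => Real.exp (γ * c ^ 2) * Real.exp (-(γ/2) * (n : ℝ) ^ 2)) ?_ ?_
  · intro n
    rw [← Real.exp_add]
    apply Real.exp_le_exp.2
    nlinarith [sq_nonneg ((n : ℝ) + 2 * c)]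
  · exact (gaussZ (by linarith)).mul_left _

lemma gaussShiftBound {γ : ℝ} (hγ : 0 < γ) (c : ℝ) :
    ∑' n : ℤ, Real.exp (-γ * ((n : ℝ) + c) ^ 2)
      ≤ Real.exp γ * ∑' n : ℤ, Real.exp (-(γ/2) * (n : ℝ) ^ 2) := by
  have ht : |Int.fract c| ≤ 1 := by
    rw [abs_le]
    constructor
    · linarith [Int.fract_nonneg c]
    · linarith [(Int.fract_lt_one c).le]
  have h1 : ∑' n : ℤ, Real.exp (-γ * ((n : ℝ) + c) ^ 2)
      = ∑' n : ℤ, Real.exp (-γ * ((n : ℝ) + Int.fract c) ^ 2) := by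
    rw [← (Equiv.addRight ⌊c⌋).tsum_eq
      (fun n : ℤ => Real.exp (-γ * ((n : ℝ) + Int.fract c) ^ 2))]
    apply tsum_congr
    intro n
    congr 1
    have hf : Int.fract c = c - ⌊c⌋ := rfl
    simp only [Equiv.coe_addRight]
    push_cast
    rw [hf]
    ring
  rw [h1, ← tsum_mul_left]
  refine Summable.tsum_le_tsum ?_ (gaussShift hγ _) ((gaussZ (by linarith)).mul_left _)
  intro n
  rw [← Real.exp_add]
  apply Real.exp_le_exp.2
  have h2 : Int.fract c ^ 2 ≤ 1 := by
    rw [← one_pow 2]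
    exact sq_abs (Int.fract c) ▸ pow_le_pow_left₀ (abs_nonneg _) ht 2
  nlinarith [sq_nonneg ((n : ℝ) + 2 * Int.fract c)]

lemma absExpAux (u w : ℝ) : ‖Complex.exp ((u : ℂ) + (w : ℂ) * Complex.I)‖ = Real.exp u := by
  rw [Complex.norm_exp]
  simp

/-- `Ψ_{𝔷,ξ}(x,y) = exp(πi(4𝔞xy + 2i𝔟(x²+y²)) + 2πix⟨ξ,(1,1)⟩ + 2πiy⟨ξ,(1,−1)⟩)`. -/
noncomputable def PsiQ (a b : ℝ) (ξ : ℝ × ℝ) (x y : ℝ) : ℂ :=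
  Complex.exp (Real.pi * Complex.I * (4 * (a : ℂ) * x * y
      + 2 * Complex.I * (b : ℂ) * ((x : ℂ) ^ 2 + (y : ℂ) ^ 2))
    + 2 * Real.pi * Complex.I * (x : ℂ) * ((ξ.1 : ℂ) + (ξ.2 : ℂ))
    + 2 * Real.pi * Complex.I * (y : ℂ) * ((ξ.1 : ℂ) - (ξ.2 : ℂ)))

/-- The terms of the transformed sum. -/
noncomputable def Gfun (r s a b : ℝ) (ξ : ℝ × ℝ) (x y : ℤ) : ℂ :=
  Complex.exp (-(2 * Real.pi * s ^ 2 * b * (y : ℂ) ^ 2)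
    - (Real.pi / (2 * r ^ 2 * b)) *
        ((x : ℂ) + 2 * r * s * a * (y : ℂ) + r * ((ξ.1 : ℂ) + (ξ.2 : ℂ))) ^ 2
    + 2 * Real.pi * Complex.I * (y : ℂ) * (s * ((ξ.1 : ℂ) - (ξ.2 : ℂ))))

lemma Fnorm (r s a b : ℝ) (ξ : ℝ × ℝ) (x y : ℤ) :
    ‖PsiQ a b ξ (r * x) (s * y)‖
      = Real.exp (-(2 * Real.pi * b * r ^ 2) * (x : ℝ) ^ 2)
        * Real.exp (-(2 * Real.pi * b * s ^ 2) * (y : ℝ) ^ 2) := by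
  have h : PsiQ a b ξ (r * x) (s * y)
      = Complex.exp (((-(2 * Real.pi * b * r ^ 2) * (x : ℝ) ^ 2
            + -(2 * Real.pi * b * s ^ 2) * (y : ℝ) ^ 2 : ℝ) : ℂ)
        + ((Real.pi * (4 * a * (r * x) * (s * y)) + 2 * Real.pi * (r * x) * (ξ.1 + ξ.2)
            + 2 * Real.pi * (s * y) * (ξ.1 - ξ.2) : ℝ) : ℂ) * Complex.I) := by
    unfold PsiQ
    congr 1
    push_cast
    linear_combination (2*(Real.pi:ℂ)*(b:ℂ)*(((r:ℂ)*(x:ℂ))^2+((s:ℂ)*(y:ℂ))^2)) * Complex.I_sq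
  rw [h, absExpAux, Real.exp_add]

lemma Gnorm (r s a b : ℝ) (hr : 0 < r) (hb : 0 < b) (ξ : ℝ × ℝ) (x y : ℤ) :
    ‖Gfun r s a b ξ x y‖
      = Real.exp (-(2 * Real.pi * s ^ 2 * b) * (y : ℝ) ^ 2)
        * Real.exp (-(Real.pi / (2 * r ^ 2 * b)) *
            ((x : ℝ) + (2 * r * s * a * y + r * (ξ.1 + ξ.2))) ^ 2) := by
  have h : Gfun r s a b ξ x y
      = Complex.exp (((-(2 * Real.pi * s ^ 2 * b) * (y : ℝ) ^ 2
            + -(Real.pi / (2 * r ^ 2 * b)) *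
                ((x : ℝ) + (2 * r * s * a * y + r * (ξ.1 + ξ.2))) ^ 2 : ℝ) : ℂ)
        + ((2 * Real.pi * y * (s * (ξ.1 - ξ.2)) : ℝ) : ℂ) * Complex.I) := by
    unfold Gfun
    congr 1
    have hb' : ((2 * r ^ 2 * b : ℝ) : ℂ) ≠ 0 := by
      exact_mod_cast ne_of_gt (by positivity : (0:ℝ) < 2 * r ^ 2 * b)
    push_cast at hb' ⊢
    field_simp
    ring
  rw [h, absExpAux, Real.exp_add]

set_option maxHeartbeats 1000000 in
lemma keyLemma (r s a b : ℝ) (hr : 0 < r) (hs : 0 < s) (hb : 0 < b) (ξ : ℝ × ℝ) (y : ℤ) :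
    ∑' x : ℤ, PsiQ a b ξ (r * x) (s * y)
      = (1 / ((r : ℂ) * ((Real.sqrt (2 * b) : ℝ) : ℂ))) * ∑' x : ℤ, Gfun r s a b ξ x y := by
  have hA : (0:ℝ) < 2 * r ^ 2 * b := by positivity
  set Cy : ℝ := 2 * r * s * a * y + r * (ξ.1 + ξ.2) with hCy
  set E : ℂ := -(2 * Real.pi * s ^ 2 * b) * (y : ℂ) ^ 2
      + 2 * Real.pi * Complex.I * (y : ℂ) * ((s : ℂ) * ((ξ.1 : ℂ) - (ξ.2 : ℂ))) with hE
  have h1 : ∀ x : ℤ, PsiQ a b ξ (r * x) (s * y)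
      = Complex.exp E * Complex.exp (-(Real.pi : ℂ) * ((2 * r ^ 2 * b : ℝ) : ℂ) * (x : ℂ) ^ 2
          + 2 * (Real.pi : ℂ) * (Complex.I * ((Cy : ℝ) : ℂ)) * (x : ℂ)) := by
    intro x
    rw [← Complex.exp_add]
    unfold PsiQ
    congr 1
    rw [hE, hCy]
    push_cast
    linear_combination (2*(Real.pi:ℂ)*(b:ℂ)*(((r:ℂ)*(x:ℂ))^2+((s:ℂ)*(y:ℂ))^2)) * Complex.I_sq
  have h2 : ∀ x : ℤ, Gfun r s a b ξ x y
      = Complex.exp E * Complex.exp (-(Real.pi : ℂ) / ((2 * r ^ 2 * b : ℝ) : ℂ)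
          * ((x : ℂ) + ((Cy : ℝ) : ℂ)) ^ 2) := by
    intro x
    rw [← Complex.exp_add]
    unfold Gfun
    congr 1
    rw [hE, hCy]
    push_cast
    ring
  have h3 : ∑' x : ℤ, Complex.exp (-(Real.pi : ℂ) / ((2 * r ^ 2 * b : ℝ) : ℂ)
        * ((x : ℂ) + Complex.I * (Complex.I * ((Cy : ℝ) : ℂ))) ^ 2)
      = ∑' x : ℤ, Complex.exp (-(Real.pi : ℂ) / ((2 * r ^ 2 * b : ℝ) : ℂ)
        * ((x : ℂ) + ((Cy : ℝ) : ℂ)) ^ 2) := by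
    rw [← (Equiv.neg ℤ).tsum_eq (fun x : ℤ => Complex.exp (-(Real.pi : ℂ)
      / ((2 * r ^ 2 * b : ℝ) : ℂ) * ((x : ℂ) + ((Cy : ℝ) : ℂ)) ^ 2))]
    refine tsum_congr fun x => ?_
    simp only [Equiv.neg_apply]
    rw [← mul_assoc, Complex.I_mul_I]
    congr 1
    push_cast
    ring
  have hsqrt : ((2 * r ^ 2 * b : ℝ) : ℂ) ^ (1/2 : ℂ)
      = (r : ℂ) * ((Real.sqrt (2 * b) : ℝ) : ℂ) := by
    rw [show (1/2 : ℂ) = ((1/2 : ℝ) : ℂ) by norm_num, ← Complex.ofReal_cpow hA.le]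
    have : (2 * r ^ 2 * b) ^ (1/2 : ℝ) = r * Real.sqrt (2 * b) := by
      rw [← Real.sqrt_eq_rpow, show 2 * r ^ 2 * b = r ^ 2 * (2 * b) by ring,
        Real.sqrt_mul (sq_nonneg r), Real.sqrt_sq hr.le]
    rw [this]
    push_cast
    ring
  have ha' : 0 < (((2 * r ^ 2 * b : ℝ) : ℂ)).re := by rw [Complex.ofReal_re]; exact hA
  calc ∑' x : ℤ, PsiQ a b ξ (r * x) (s * y)
      = ∑' x : ℤ, Complex.exp E * Complex.exp (-(Real.pi : ℂ) * ((2 * r ^ 2 * b : ℝ) : ℂ)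
          * (x : ℂ) ^ 2 + 2 * (Real.pi : ℂ) * (Complex.I * ((Cy : ℝ) : ℂ)) * (x : ℂ)) :=
        tsum_congr h1
    _ = Complex.exp E * ∑' x : ℤ, Complex.exp (-(Real.pi : ℂ) * ((2 * r ^ 2 * b : ℝ) : ℂ)
          * (x : ℂ) ^ 2 + 2 * (Real.pi : ℂ) * (Complex.I * ((Cy : ℝ) : ℂ)) * (x : ℂ)) :=
        tsum_mul_left
    _ = Complex.exp E * (1 / ((2 * r ^ 2 * b : ℝ) : ℂ) ^ (1/2 : ℂ)
          * ∑' x : ℤ, Complex.exp (-(Real.pi : ℂ) / ((2 * r ^ 2 * b : ℝ) : ℂ)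
              * ((x : ℂ) + Complex.I * (Complex.I * ((Cy : ℝ) : ℂ))) ^ 2)) := by
        rw [Complex.tsum_exp_neg_quadratic ha' (Complex.I * ((Cy : ℝ) : ℂ))]
    _ = Complex.exp E * (1 / ((r : ℂ) * ((Real.sqrt (2 * b) : ℝ) : ℂ))
          * ∑' x : ℤ, Complex.exp (-(Real.pi : ℂ) / ((2 * r ^ 2 * b : ℝ) : ℂ)
              * ((x : ℂ) + ((Cy : ℝ) : ℂ)) ^ 2)) := by rw [hsqrt, h3]
    _ = (1 / ((r : ℂ) * ((Real.sqrt (2 * b) : ℝ) : ℂ)))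
          * ∑' x : ℤ, Complex.exp E * Complex.exp (-(Real.pi : ℂ) / ((2 * r ^ 2 * b : ℝ) : ℂ)
              * ((x : ℂ) + ((Cy : ℝ) : ℂ)) ^ 2) := by rw [tsum_mul_left]; ring
    _ = (1 / ((r : ℂ) * ((Real.sqrt (2 * b) : ℝ) : ℂ))) * ∑' x : ℤ, Gfun r s a b ξ x y := by
        rw [tsum_congr fun x => (h2 x).symm]

set_option maxHeartbeats 1000000 in
lemma Gswap (r s a b : ℝ) (hr : 0 < r) (hs : 0 < s) (hb : 0 < b) (ξ : ℝ × ℝ) :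
    Summable (fun q : ℤ × ℤ => Gfun r s a b ξ q.2 q.1) := by
  have hβ : (0:ℝ) < Real.pi / (2 * r ^ 2 * b) := div_pos Real.pi_pos (by positivity)
  have hc2 : (0:ℝ) < 2 * Real.pi * s ^ 2 * b := by positivity
  apply Summable.of_norm_bounded
    (g := fun q : ℤ × ℤ => Real.exp (-(2 * Real.pi * s ^ 2 * b) * (q.1 : ℝ) ^ 2)
      * Real.exp (-(Real.pi / (2 * r ^ 2 * b)) *
          ((q.2 : ℝ) + (2 * r * s * a * q.1 + r * (ξ.1 + ξ.2))) ^ 2))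
    ?_ (fun q => le_of_eq (Gnorm r s a b hr hb ξ q.2 q.1))
  rw [summable_prod_of_nonneg (fun q => mul_nonneg (Real.exp_pos _).le (Real.exp_pos _).le)]
  refine ⟨fun y => (gaussShift hβ (2 * r * s * a * y + r * (ξ.1 + ξ.2))).mul_left (Real.exp (-(2 * Real.pi * s ^ 2 * b) * (y : ℝ) ^ 2)), ?_⟩
  set K : ℝ := Real.exp (Real.pi / (2 * r ^ 2 * b))
    * ∑' n : ℤ, Real.exp (-(Real.pi / (2 * r ^ 2 * b) / 2) * (n : ℝ) ^ 2) with hKdef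
  have hbound : ∀ y : ℤ, (∑' x : ℤ,
      Real.exp (-(2 * Real.pi * s ^ 2 * b) * (y : ℝ) ^ 2)
      * Real.exp (-(Real.pi / (2 * r ^ 2 * b)) *
          ((x : ℝ) + (2 * r * s * a * y + r * (ξ.1 + ξ.2))) ^ 2))
      ≤ K * Real.exp (-(2 * Real.pi * s ^ 2 * b) * (y : ℝ) ^ 2) := by
    intro y
    rw [tsum_mul_left, hKdef]
    calc Real.exp (-(2 * Real.pi * s ^ 2 * b) * (y : ℝ) ^ 2)
          * ∑' x : ℤ, Real.exp (-(Real.pi / (2 * r ^ 2 * b)) *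
              ((x : ℝ) + (2 * r * s * a * y + r * (ξ.1 + ξ.2))) ^ 2)
        ≤ Real.exp (-(2 * Real.pi * s ^ 2 * b) * (y : ℝ) ^ 2)
          * (Real.exp (Real.pi / (2 * r ^ 2 * b))
            * ∑' n : ℤ, Real.exp (-(Real.pi / (2 * r ^ 2 * b) / 2) * (n : ℝ) ^ 2)) :=
          mul_le_mul_of_nonneg_left (gaussShiftBound hβ _) (Real.exp_pos _).le
      _ = _ := by ring
  exact Summable.of_nonneg_of_le (fun y => tsum_nonneg fun x => mul_nonneg (Real.exp_pos _).le (Real.exp_pos _).le)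
    hbound (((gaussZ hc2).mul_left K))

set_option maxHeartbeats 1000000 in
theorem stmt_12 (r s a b : ℝ) (hr : 0 < r) (hs : 0 < s) (hb : 0 < b) (ξ : ℝ × ℝ) :
    (∑' p : ℤ × ℤ, PsiQ a b ξ (r * p.1) (s * p.2))
      = (1 / (r * Real.sqrt (2 * b))) *
        ∑' p : ℤ × ℤ,
          Complex.exp (-(2 * Real.pi * s ^ 2 * b * (p.2 : ℂ) ^ 2)
            - (Real.pi / (2 * r ^ 2 * b)) *
                ((p.1 : ℂ) + 2 * r * s * a * (p.2 : ℂ) + r * ((ξ.1 : ℂ) + (ξ.2 : ℂ))) ^ 2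
            + 2 * Real.pi * Complex.I * (p.2 : ℂ) * (s * ((ξ.1 : ℂ) - (ξ.2 : ℂ)))) := by
  have hβ : (0:ℝ) < Real.pi / (2 * r ^ 2 * b) := div_pos Real.pi_pos (by positivity)
  have hc2 : (0:ℝ) < 2 * Real.pi * s ^ 2 * b := by positivity
  have hFs : Summable fun p : ℤ × ℤ => PsiQ a b ξ (r * p.1) (s * p.2) := by
    apply Summable.of_norm_bounded
      ((gaussZ (show (0:ℝ) < 2 * Real.pi * b * r ^ 2 by positivity)).mul_of_nonneg
        (gaussZ (show (0:ℝ) < 2 * Real.pi * b * s ^ 2 by positivity))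
        (fun _ => (Real.exp_pos _).le) (fun _ => (Real.exp_pos _).le))
    exact fun p => le_of_eq (Fnorm r s a b ξ p.1 p.2)
  have hGswap : Summable (fun q : ℤ × ℤ => Gfun r s a b ξ q.2 q.1) :=
    Gswap r s a b hr hs hb ξ
  have hL : (∑' p : ℤ × ℤ, PsiQ a b ξ (r * p.1) (s * p.2))
      = ∑' y : ℤ, ∑' x : ℤ, PsiQ a b ξ (r * x) (s * y) := by
    rw [← (Equiv.prodComm ℤ ℤ).tsum_eq (fun p : ℤ × ℤ => PsiQ a b ξ (r * p.1) (s * p.2))]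
    exact Summable.tsum_prod ((Equiv.prodComm ℤ ℤ).summable_iff.2 hFs)
  have hR : (∑' p : ℤ × ℤ, Gfun r s a b ξ p.1 p.2)
      = ∑' y : ℤ, ∑' x : ℤ, Gfun r s a b ξ x y := by
    rw [← (Equiv.prodComm ℤ ℤ).tsum_eq (fun p : ℤ × ℤ => Gfun r s a b ξ p.1 p.2)]
    exact Summable.tsum_prod hGswap
  calc (∑' p : ℤ × ℤ, PsiQ a b ξ (r * p.1) (s * p.2))
      = ∑' y : ℤ, ∑' x : ℤ, PsiQ a b ξ (r * x) (s * y) := hL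
    _ = ∑' y : ℤ, (1 / ((r : ℂ) * ((Real.sqrt (2 * b) : ℝ) : ℂ)))
          * ∑' x : ℤ, Gfun r s a b ξ x y :=
        tsum_congr (fun y => keyLemma r s a b hr hs hb ξ y)
    _ = (1 / ((r : ℂ) * ((Real.sqrt (2 * b) : ℝ) : ℂ)))
          * ∑' y : ℤ, ∑' x : ℤ, Gfun r s a b ξ x y := tsum_mul_left
    _ = _ := by rw [← hR]; unfold Gfun; norm_cast
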